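/- arXiv:2511.20364 — 2 statements merged into one kernel-verified Lean document; each statement's English description precedes it below -/
import Mathlib

section
/- Let M > N be positive integers and v_1,…,v_M ∈ ℂ^N unit-norm vectors. Then max_{i≠j} |⟨v_i, v_j⟩| ≥ sqrt((M−N)/(N(M−1))). -/
open scoped InnerProductSpace

/-- The Welch bound: for `M > N` unit-norm vectors in `ℂ^N`, the maximal pairwise
coherence is at least `sqrt((M−N)/(N(M−1)))`: there exist distinct `i, j` with
`|⟨v i, v j⟩| ≥ sqrt((M−N)/(N(M−1)))`. -/
theorem stmt_7 (M N : ℕ) (hN : 0 < N) (hMN : N < M)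
    (v : Fin M → EuclideanSpace ℂ (Fin N)) (hnorm : ∀ i, ‖v i‖ = 1) :
    ∃ i j, i ≠ j ∧
      Real.sqrt ((M - N) / (N * (M - 1))) ≤ ‖(⟪v i, v j⟫_ℂ : ℂ)‖ := by
  classical
  have hM2 : 2 ≤ M := by omega
  have hinner : ∀ x y : EuclideanSpace ℂ (Fin N),
      ⟪x, y⟫_ℂ = ∑ a, (starRingEnd ℂ) (x a) * y a := by
    intro x y; simp [PiLp.inner_apply, RCLike.inner_apply]; exact Finset.sum_congr rfl fun _ _ => mul_comm _ _
  set T : Fin N → Fin N → ℂ := fun a b => ∑ i, (starRingEnd ℂ) (v i a) * v i b with hT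
  have swap4 : ∀ (t : Fin M → Fin M → Fin N → Fin N → ℂ),
      (∑ i, ∑ j, ∑ a, ∑ b, t i j a b) = ∑ a, ∑ b, ∑ i, ∑ j, t i j a b := by
    intro t
    have h1 : ∀ i : Fin M, (∑ j, ∑ a, ∑ b, t i j a b) = ∑ a, ∑ j, ∑ b, t i j a b :=
      fun i => Finset.sum_comm
    simp_rw [h1]
    rw [Finset.sum_comm]
    have h2 : ∀ (a : Fin N) (i : Fin M), (∑ j, ∑ b, t i j a b) = ∑ b, ∑ j, t i j a b :=
      fun a i => Finset.sum_comm
    simp_rw [h2]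
    exact Finset.sum_congr rfl fun a _ => Finset.sum_comm
  have expand1 : ∀ i j : Fin M, ⟪v i, v j⟫_ℂ * (starRingEnd ℂ) ⟪v i, v j⟫_ℂ
      = ∑ a, ∑ b, (((starRingEnd ℂ) (v i a) * v j a) * (v i b * (starRingEnd ℂ) (v j b))) := by
    intro i j
    rw [hinner, map_sum, Finset.sum_mul_sum]
    refine Finset.sum_congr rfl fun a _ => Finset.sum_congr rfl fun b _ => ?_
    simp [map_mul]
  have expand2 : ∀ a b : Fin N, T a b * (starRingEnd ℂ) (T a b)
      = ∑ i, ∑ j, (((starRingEnd ℂ) (v i a) * v i b) * (v j a * (starRingEnd ℂ) (v j b))) := by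
    intro a b
    rw [hT]
    simp only
    rw [map_sum, Finset.sum_mul_sum]
    refine Finset.sum_congr rfl fun i _ => Finset.sum_congr rfl fun j _ => ?_
    simp [map_mul]
  have keyC : ∑ i, ∑ j, ⟪v i, v j⟫_ℂ * (starRingEnd ℂ) ⟪v i, v j⟫_ℂ
      = ∑ a, ∑ b, T a b * (starRingEnd ℂ) (T a b) := by
    simp_rw [expand1, expand2]
    rw [swap4]
    refine Finset.sum_congr rfl fun a _ => Finset.sum_congr rfl fun b _ =>
      Finset.sum_congr rfl fun i _ => Finset.sum_congr rfl fun j _ => ?_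
    ring
  have hns : ∀ z : ℂ, ‖z‖^2 = (z * (starRingEnd ℂ) z).re := by
    intro z; rw [Complex.mul_conj]; simp [Complex.sq_norm]
  have keyR : ∑ i, ∑ j, ‖(⟪v i, v j⟫_ℂ : ℂ)‖^2 = ∑ a, ∑ b, ‖T a b‖^2 := by
    simp_rw [hns, ← Complex.re_sum]
    rw [keyC]
  -- trace of T
  have htraceterm : ∀ a : Fin N, (T a a).re = ∑ i, ‖v i a‖^2 := by
    intro a
    rw [hT]
    simp only
    rw [Complex.re_sum]
    refine Finset.sum_congr rfl fun i _ => ?_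
    rw [mul_comm, Complex.mul_conj]
    norm_cast
    simp [Complex.normSq_eq_norm_sq]
  have htrace : ∑ a, (T a a).re = (M : ℝ) := by
    simp_rw [htraceterm]
    rw [Finset.sum_comm]
    have h1 : ∀ i : Fin M, ∑ a, ‖v i a‖^2 = 1 := by
      intro i
      have h2 : ‖v i‖^2 = ∑ a, ‖v i a‖^2 := by
        rw [EuclideanSpace.norm_eq, Real.sq_sqrt (by positivity)]
      rw [← h2, hnorm i, one_pow]
    simp only [h1]
    simp
  -- Cauchy-Schwarz on the diagonal
  have hB : (M : ℝ)^2 ≤ (N : ℝ) * ∑ a, ∑ b, ‖T a b‖^2 := by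
    have h1 : (∑ a, (T a a).re)^2 ≤ (N : ℝ) * ∑ a, ((T a a).re)^2 := by
      have := sq_sum_le_card_mul_sum_sq (s := (Finset.univ : Finset (Fin N)))
        (f := fun a => (T a a).re)
      simpa using this
    have h2 : ∑ a, ((T a a).re)^2 ≤ ∑ a, ∑ b, ‖T a b‖^2 := by
      refine Finset.sum_le_sum fun a _ => ?_
      have h3 : ((T a a).re)^2 ≤ ‖T a a‖^2 := by
        have h := Complex.abs_re_le_norm (T a a)
        calc ((T a a).re)^2 = |(T a a).re|^2 := (sq_abs _).symm
          _ ≤ ‖T a a‖^2 := by gcongr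
          _ = ‖T a a‖^2 := rfl
      calc ((T a a).re)^2 ≤ ‖T a a‖^2 := h3
        _ ≤ ∑ b, ‖T a b‖^2 :=
          Finset.single_le_sum (f := fun b => ‖T a b‖^2)
            (fun b _ => by positivity) (Finset.mem_univ a)
    calc (M : ℝ)^2 = (∑ a, (T a a).re)^2 := by rw [htrace]
      _ ≤ (N : ℝ) * ∑ a, ((T a a).re)^2 := h1
      _ ≤ (N : ℝ) * ∑ a, ∑ b, ‖T a b‖^2 :=
          mul_le_mul_of_nonneg_left h2 (by positivity)
  -- split off diagonal
  set s : Finset (Fin M × Fin M) := Finset.univ.filter (fun p => p.1 ≠ p.2) with hs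
  have hsne : s.Nonempty := by
    refine ⟨(⟨0, by omega⟩, ⟨1, by omega⟩), ?_⟩
    simp [hs, Fin.ext_iff]
  obtain ⟨p, hp, hmax⟩ := Finset.exists_max_image s (fun p => ‖(⟪v p.1, v p.2⟫_ℂ : ℂ)‖) hsne
  set c : ℝ := ‖(⟪v p.1, v p.2⟫_ℂ : ℂ)‖ with hc
  have hpne : p.1 ≠ p.2 := by
    have := hp; rw [hs] at this; simpa using this
  have hcnn : 0 ≤ c := norm_nonneg _
  -- sum decomposition
  have hSsplit : ∑ i, ∑ j, ‖(⟪v i, v j⟫_ℂ : ℂ)‖^2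
      = (M : ℝ) + ∑ q ∈ s, ‖(⟪v q.1, v q.2⟫_ℂ : ℂ)‖^2 := by
    have hprod : ∑ q : Fin M × Fin M, ‖(⟪v q.1, v q.2⟫_ℂ : ℂ)‖^2
        = ∑ i, ∑ j, ‖(⟪v i, v j⟫_ℂ : ℂ)‖^2 := Fintype.sum_prod_type _
    rw [← hprod]
    rw [← Finset.sum_filter_add_sum_filter_not Finset.univ (fun q : Fin M × Fin M => q.1 = q.2)]
    congr 1
    rw [Finset.sum_filter, Fintype.sum_prod_type]
    have hdiag : ∀ i : Fin M, ‖(⟪v i, v i⟫_ℂ : ℂ)‖ = 1 := by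
      intro i; simp [inner_self_eq_norm_sq_to_K, hnorm]
    simp only [Finset.sum_ite_eq, Finset.mem_univ, if_true]
    simp only [hdiag]
    simp
  have hcard : (s.card : ℝ) = (M : ℝ) * (M : ℝ) - (M : ℝ) := by
    have hd : ((Finset.univ.filter (fun p : Fin M × Fin M => p.1 = p.2)).card) = M := by
      rw [Finset.card_filter, Fintype.sum_prod_type]
      simp
    have h2 := Finset.card_filter_add_card_filter_not
      (s := (Finset.univ : Finset (Fin M × Fin M))) (p := fun p => p.1 = p.2)
    have h3 : s.card = M * M - M := by
      simp only [Finset.card_univ, Fintype.card_prod, Fintype.card_fin, hd] at h2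
      rw [hs]
      simp only [ne_eq]
      omega
    rw [h3]
    have : M ≤ M * M := Nat.le_mul_of_pos_left M (by omega)
    push_cast [Nat.cast_sub this]
    ring
  have hoff : ∑ q ∈ s, ‖(⟪v q.1, v q.2⟫_ℂ : ℂ)‖^2 ≤ ((M:ℝ) * M - M) * c^2 := by
    calc ∑ q ∈ s, ‖(⟪v q.1, v q.2⟫_ℂ : ℂ)‖^2 ≤ ∑ q ∈ s, c^2 := by
          refine Finset.sum_le_sum fun q hq => ?_
          have := hmax q hq
          have hn : (0:ℝ) ≤ ‖(⟪v q.1, v q.2⟫_ℂ : ℂ)‖ := norm_nonneg _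
          nlinarith
      _ = (s.card : ℝ) * c^2 := by rw [Finset.sum_const, nsmul_eq_mul]
      _ = ((M:ℝ) * M - M) * c^2 := by rw [hcard]
  -- final numeric assembly
  refine ⟨p.1, p.2, hpne, ?_⟩
  have hkey : (M : ℝ)^2 ≤ (N : ℝ) * ((M : ℝ) + ((M:ℝ) * M - M) * c^2) := by
    calc (M : ℝ)^2 ≤ (N : ℝ) * ∑ a, ∑ b, ‖T a b‖^2 := hB
      _ = (N : ℝ) * ∑ i, ∑ j, ‖(⟪v i, v j⟫_ℂ : ℂ)‖^2 := by rw [keyR]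
      _ = (N : ℝ) * ((M : ℝ) + ∑ q ∈ s, ‖(⟪v q.1, v q.2⟫_ℂ : ℂ)‖^2) := by rw [hSsplit]
      _ ≤ (N : ℝ) * ((M : ℝ) + ((M:ℝ) * M - M) * c^2) := by
          have hNpos : (0:ℝ) < N := by exact_mod_cast hN
          nlinarith [hoff]
  have hm : (1:ℝ) ≤ (M:ℝ) - 1 := by
    have : (2:ℝ) ≤ M := by exact_mod_cast hM2
    linarith
  have hn1 : (1:ℝ) ≤ (N:ℝ) := by exact_mod_cast hN
  have hnm : (N:ℝ) + 1 ≤ (M:ℝ) := by exact_mod_cast hMN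
  have hfrac : ((M:ℝ) - N) / ((N:ℝ) * ((M:ℝ) - 1)) ≤ c^2 := by
    rw [div_le_iff₀ (by nlinarith)]
    have hMpos : (0:ℝ) < M := by linarith
    nlinarith [hkey]
  calc Real.sqrt ((M - N) / (N * (M - 1))) ≤ Real.sqrt (c^2) := Real.sqrt_le_sqrt hfrac
    _ = c := Real.sqrt_sq hcnn
end

section
/- Let v_1,…,v_M ∈ ℂ^N be unit-norm vectors with M > N. Then Σ_{i,j} |⟨v_i, v_j⟩|² ≥ M²/N. -/
open scoped InnerProductSpace

/-- Auxiliary: swap a quadruple sum. -/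
lemma sum4_swap {γ : Type*} [AddCommMonoid γ] {α β : Type*} [Fintype α] [Fintype β]
    (F : α → α → β → β → γ) :
    ∑ i : α, ∑ j : α, ∑ a : β, ∑ b : β, F i j a b
      = ∑ a : β, ∑ b : β, ∑ i : α, ∑ j : α, F i j a b := by
  calc ∑ i : α, ∑ j : α, ∑ a : β, ∑ b : β, F i j a b
      = ∑ i : α, ∑ a : β, ∑ j : α, ∑ b : β, F i j a b :=
        Finset.sum_congr rfl fun i _ => Finset.sum_comm
    _ = ∑ a : β, ∑ i : α, ∑ j : α, ∑ b : β, F i j a b := Finset.sum_comm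
    _ = ∑ a : β, ∑ i : α, ∑ b : β, ∑ j : α, F i j a b :=
        Finset.sum_congr rfl fun a _ => Finset.sum_congr rfl fun i _ => Finset.sum_comm
    _ = ∑ a : β, ∑ b : β, ∑ i : α, ∑ j : α, F i j a b :=
        Finset.sum_congr rfl fun a _ => Finset.sum_comm

/-- The Welch bound in sum form: for `M > N` unit-norm vectors in `ℂ^N`,
`∑_{i,j} |⟨v i, v j⟩|² ≥ M²/N`. -/
theorem stmt_8 (M N : ℕ) (hN : 0 < N) (hMN : N < M)
    (v : Fin M → EuclideanSpace ℂ (Fin N)) (hnorm : ∀ i, ‖v i‖ = 1) :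
    (M : ℝ) ^ 2 / N ≤ ∑ i : Fin M, ∑ j : Fin M, ‖(⟪v i, v j⟫_ℂ : ℂ)‖ ^ 2 := by
  classical
  set T : Fin N → Fin N → ℂ := fun a b => ∑ i : Fin M, (starRingEnd ℂ) (v i a) * v i b with hT
  -- the key rearrangement identity
  have key : ∑ i : Fin M, ∑ j : Fin M, ‖(⟪v i, v j⟫_ℂ : ℂ)‖ ^ 2
      = ∑ a : Fin N, ∑ b : Fin N, ‖T a b‖ ^ 2 := by
    have expand : ∀ z : ℂ, (‖z‖ : ℝ) ^ 2 = (z * (starRingEnd ℂ) z).re := by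
      intro z
      rw [Complex.mul_conj, Complex.ofReal_re, ← Complex.sq_norm]
    have hc : ∑ i : Fin M, ∑ j : Fin M, (⟪v i, v j⟫_ℂ * (starRingEnd ℂ) ⟪v i, v j⟫_ℂ)
        = ∑ a : Fin N, ∑ b : Fin N, (T a b * (starRingEnd ℂ) (T a b)) := by
      have L : ∀ i j : Fin M, ⟪v i, v j⟫_ℂ * (starRingEnd ℂ) ⟪v i, v j⟫_ℂ
          = ∑ a : Fin N, ∑ b : Fin N,
            ((starRingEnd ℂ) (v i a) * v j a) * (v i b * (starRingEnd ℂ) (v j b)) := by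
        intro i j
        rw [PiLp.inner_apply]
        simp only [RCLike.inner_apply, map_sum, map_mul, RingHomCompTriple.comp_apply,
          RingHom.id_apply, Finset.sum_mul_sum, starRingEnd_self_apply]
        apply Finset.sum_congr rfl; intro a _
        apply Finset.sum_congr rfl; intro b _
        ring
      have R : ∀ a b : Fin N, T a b * (starRingEnd ℂ) (T a b)
          = ∑ i : Fin M, ∑ j : Fin M,
            ((starRingEnd ℂ) (v i a) * v j a) * (v i b * (starRingEnd ℂ) (v j b)) := by
        intro a b
        rw [hT]
        simp only [map_sum, map_mul, RingHomCompTriple.comp_apply, RingHom.id_apply,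
          Finset.sum_mul_sum, starRingEnd_self_apply]
        apply Finset.sum_congr rfl; intro i _
        apply Finset.sum_congr rfl; intro j _
        ring
      simp only [L, R]
      exact sum4_swap _
    calc ∑ i : Fin M, ∑ j : Fin M, ‖(⟪v i, v j⟫_ℂ : ℂ)‖ ^ 2
        = (∑ i : Fin M, ∑ j : Fin M, (⟪v i, v j⟫_ℂ * (starRingEnd ℂ) ⟪v i, v j⟫_ℂ)).re := by
          simp only [Complex.re_sum, expand]
      _ = (∑ a : Fin N, ∑ b : Fin N, (T a b * (starRingEnd ℂ) (T a b))).re := by rw [hc]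
      _ = ∑ a : Fin N, ∑ b : Fin N, ‖T a b‖ ^ 2 := by
          simp only [Complex.re_sum, expand]
  set g : Fin N → ℝ := fun a => ∑ i : Fin M, ‖v i a‖ ^ 2 with hg
  have hdiag : ∀ a : Fin N, T a a = ((g a : ℝ) : ℂ) := by
    intro a
    rw [hT, hg]
    push_cast
    apply Finset.sum_congr rfl; intro i _
    rw [mul_comm, Complex.mul_conj, ← Complex.sq_norm]
    norm_cast
  have hsum : ∑ a : Fin N, g a = M := by
    rw [hg, Finset.sum_comm]
    have h : ∀ i : Fin M, ∑ a : Fin N, ‖v i a‖ ^ 2 = 1 := by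
      intro i
      rw [← PiLp.norm_sq_eq_of_L2, hnorm i, one_pow]
    rw [Finset.sum_congr rfl fun i _ => h i]
    simp
  have cs : (M : ℝ) ^ 2 ≤ N * ∑ a : Fin N, (g a) ^ 2 := by
    have := sq_sum_le_card_mul_sum_sq (s := (Finset.univ : Finset (Fin N))) (f := g)
    simpa [hsum] using this
  have diag_le : ∑ a : Fin N, (g a) ^ 2 ≤ ∑ a : Fin N, ∑ b : Fin N, ‖T a b‖ ^ 2 := by
    apply Finset.sum_le_sum
    intro a _
    have h1 : (g a) ^ 2 = ‖T a a‖ ^ 2 := by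
      rw [hdiag a, Complex.norm_real, Real.norm_eq_abs, sq_abs]
    rw [h1]
    exact Finset.single_le_sum (f := fun b => ‖T a b‖ ^ 2) (fun b _ => by positivity)
      (Finset.mem_univ a)
  rw [key, div_le_iff₀ (by positivity)]
  calc (M : ℝ) ^ 2 ≤ N * ∑ a : Fin N, (g a) ^ 2 := cs
    _ ≤ N * ∑ a : Fin N, ∑ b : Fin N, ‖T a b‖ ^ 2 :=
        mul_le_mul_of_nonneg_left diag_le (by positivity)
    _ = (∑ a : Fin N, ∑ b : Fin N, ‖T a b‖ ^ 2) * N := mul_comm _ _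
end
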